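/- Let L : C ⇄ D : R be a Quillen equivalence of monoidal model categories such that L is strong monoidal and D carries the R-lifted model structure. If the pushout-product axiom holds in C, and cofibrations and acyclic cofibrations of D are generated by images under L of (acyclic) cofibrations of C, then for generating cofibrations L(i) and L(j) in D the pushout product L(i) □ L(j) is isomorphic to L(i □ j), hence is a cofibration, and is acyclic if i or j is a weak equivalence. -/

import Mathlib

open CategoryTheory Limits

universe v u v' u'

/-- A (Quillen) model structure on a category `C`. -/
structure ModelStructure (C : Type u) [Category.{v} C] : Type (max u v) where
  W : MorphismProperty C
  Cof : MorphismProperty C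
  Fib : MorphismProperty C
  two_of_three : ∀ {X Y Z : C} (f : X ⟶ Y) (g : Y ⟶ Z),
      (W f → W g → W (f ≫ g)) ∧ (W f → W (f ≫ g) → W g) ∧ (W g → W (f ≫ g) → W f)
  W_retract : ∀ {A B X Y : C} (f : A ⟶ B) (g : X ⟶ Y) (i₁ : A ⟶ X) (r₁ : X ⟶ A)
      (i₂ : B ⟶ Y) (r₂ : Y ⟶ B), i₁ ≫ r₁ = 𝟙 A → i₂ ≫ r₂ = 𝟙 B →
      i₁ ≫ g = f ≫ i₂ → g ≫ r₂ = r₁ ≫ f → W g → W f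
  Cof_retract : ∀ {A B X Y : C} (f : A ⟶ B) (g : X ⟶ Y) (i₁ : A ⟶ X) (r₁ : X ⟶ A)
      (i₂ : B ⟶ Y) (r₂ : Y ⟶ B), i₁ ≫ r₁ = 𝟙 A → i₂ ≫ r₂ = 𝟙 B →
      i₁ ≫ g = f ≫ i₂ → g ≫ r₂ = r₁ ≫ f → Cof g → Cof f
  Fib_retract : ∀ {A B X Y : C} (f : A ⟶ B) (g : X ⟶ Y) (i₁ : A ⟶ X) (r₁ : X ⟶ A)
      (i₂ : B ⟶ Y) (r₂ : Y ⟶ B), i₁ ≫ r₁ = 𝟙 A → i₂ ≫ r₂ = 𝟙 B →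
      i₁ ≫ g = f ≫ i₂ → g ≫ r₂ = r₁ ≫ f → Fib g → Fib f
  Cof_llp : ∀ {A B : C} (i : A ⟶ B),
      Cof i ↔ ∀ {X Y : C} (p : X ⟶ Y), Fib p → W p → HasLiftingProperty i p
  Fib_rlp : ∀ {X Y : C} (p : X ⟶ Y),
      Fib p ↔ ∀ {A B : C} (i : A ⟶ B), Cof i → W i → HasLiftingProperty i p
  fact₁ : ∀ {X Y : C} (f : X ⟶ Y), ∃ (Z : C) (i : X ⟶ Z) (p : Z ⟶ Y),
      Cof i ∧ Fib p ∧ W p ∧ i ≫ p = f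
  fact₂ : ∀ {X Y : C} (f : X ⟶ Y), ∃ (Z : C) (i : X ⟶ Z) (p : Z ⟶ Y),
      Cof i ∧ W i ∧ Fib p ∧ i ≫ p = f

/-- The pushout product `i □ j : (B × X) ⊔_{A × X} (A × Y) ⟶ B × Y` of `i : A ⟶ B` and
`j : X ⟶ Y` (with respect to the cartesian monoidal structure). -/
noncomputable def pushoutProduct {C : Type u} [Category.{v} C] [HasBinaryProducts C]
    [HasPushouts C] {A B X Y : C} (i : A ⟶ B) (j : X ⟶ Y) :
    pushout (prod.map i (𝟙 X)) (prod.map (𝟙 A) j) ⟶ B ⨯ Y :=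
  pushout.desc (prod.map (𝟙 B) j) (prod.map i (𝟙 Y))
    (by rw [prod.map_map, prod.map_map]; simp)

/-- The model structure `MD` is the `R`-lifted model structure. -/
def IsRLifted {C : Type u} [Category.{v} C] {D : Type u'} [Category.{v'} D]
    (MC : ModelStructure C) (MD : ModelStructure D) (R : D ⥤ C) : Prop :=
  (∀ {X Y : D} (f : X ⟶ Y), MD.W f ↔ MC.W (R.map f)) ∧
  (∀ {X Y : D} (f : X ⟶ Y), MD.Fib f ↔ MC.Fib (R.map f))

/-- Transfer of cofibrations along an isomorphism of arrows. -/
lemma cof_of_arrow_iso {D : Type u'} [Category.{v'} D] (M : ModelStructure D)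
    {X Y X' Y' : D} (f : X ⟶ Y) (g : X' ⟶ Y') (e : Arrow.mk f ≅ Arrow.mk g)
    (hf : M.Cof f) : M.Cof g :=
  M.Cof_retract g f e.inv.left e.hom.left e.inv.right e.hom.right
    (by rw [← Arrow.comp_left, e.inv_hom_id]; rfl)
    (by rw [← Arrow.comp_right, e.inv_hom_id]; rfl)
    (e.inv.w) (e.hom.w.symm) hf

/-- Transfer of weak equivalences along an isomorphism of arrows. -/
lemma weq_of_arrow_iso {D : Type u'} [Category.{v'} D] (M : ModelStructure D)
    {X Y X' Y' : D} (f : X ⟶ Y) (g : X' ⟶ Y') (e : Arrow.mk f ≅ Arrow.mk g)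
    (hf : M.W f) : M.W g :=
  M.W_retract g f e.inv.left e.hom.left e.inv.right e.hom.right
    (by rw [← Arrow.comp_left, e.inv_hom_id]; rfl)
    (by rw [← Arrow.comp_right, e.inv_hom_id]; rfl)
    (e.inv.w) (e.hom.w.symm) hf

/-- The comparison isomorphism between `L (i □ j)` and `L i □ L j`. -/
noncomputable def pushoutProductComparisonIso {C : Type u} [Category.{v} C]
    {D : Type u'} [Category.{v'} D]
    [HasBinaryProducts C] [HasPushouts C] [HasBinaryProducts D] [HasPushouts D]
    (L : C ⥤ D)
    [PreservesLimitsOfShape (Discrete WalkingPair) L]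
    [PreservesColimitsOfShape WalkingSpan L]
    {A B X Y : C} (i : A ⟶ B) (j : X ⟶ Y) :
    Arrow.mk (L.map (pushoutProduct i j)) ≅
      Arrow.mk (pushoutProduct (L.map i) (L.map j)) := by
  let s : A ⨯ X ⟶ B ⨯ X := prod.map i (𝟙 X)
  let t : A ⨯ X ⟶ A ⨯ Y := prod.map (𝟙 A) j
  let pcAX := PreservesLimitPair.iso L A X
  let pcBX := PreservesLimitPair.iso L B X
  let pcAY := PreservesLimitPair.iso L A Y
  let pcBY := PreservesLimitPair.iso L B Y
  have hnat1 : L.map s ≫ pcBX.hom = pcAX.hom ≫ prod.map (L.map i) (𝟙 (L.obj X)) := by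
    simpa [s, pcAX, pcBX, PreservesLimitPair.iso_hom] using
      prodComparison_natural L i (𝟙 X)
  have hnat2 : L.map t ≫ pcAY.hom = pcAX.hom ≫ prod.map (𝟙 (L.obj A)) (L.map j) := by
    simpa [t, pcAX, pcAY, PreservesLimitPair.iso_hom] using
      prodComparison_natural L (𝟙 A) j
  -- iso between the two pushouts in D
  let φ : pushout (L.map s) (L.map t) ⟶
      pushout (prod.map (L.map i) (𝟙 (L.obj X))) (prod.map (𝟙 (L.obj A)) (L.map j)) :=
    pushout.desc (pcBX.hom ≫ pushout.inl _ _) (pcAY.hom ≫ pushout.inr _ _)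
      (by rw [reassoc_of% hnat1, reassoc_of% hnat2, pushout.condition])
  let ψ : pushout (prod.map (L.map i) (𝟙 (L.obj X))) (prod.map (𝟙 (L.obj A)) (L.map j)) ⟶
      pushout (L.map s) (L.map t) :=
    pushout.desc (pcBX.inv ≫ pushout.inl _ _) (pcAY.inv ≫ pushout.inr _ _)
      (by
        have h1 : prod.map (L.map i) (𝟙 (L.obj X)) ≫ pcBX.inv = pcAX.inv ≫ L.map s := by
          rw [Iso.comp_inv_eq, Category.assoc, hnat1, Iso.inv_hom_id_assoc]
        have h2 : prod.map (𝟙 (L.obj A)) (L.map j) ≫ pcAY.inv = pcAX.inv ≫ L.map t := by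
          rw [Iso.comp_inv_eq, Category.assoc, hnat2, Iso.inv_hom_id_assoc]
        rw [reassoc_of% h1, reassoc_of% h2, pushout.condition])
  let e1 : pushout (L.map s) (L.map t) ≅
      pushout (prod.map (L.map i) (𝟙 (L.obj X))) (prod.map (𝟙 (L.obj A)) (L.map j)) :=
    { hom := φ
      inv := ψ
      hom_inv_id := by
        apply pushout.hom_ext <;> dsimp only [φ, ψ]
        · rw [pushout.inl_desc_assoc, Category.assoc, pushout.inl_desc, Iso.hom_inv_id_assoc,
            Category.comp_id]
        · rw [pushout.inr_desc_assoc, Category.assoc, pushout.inr_desc, Iso.hom_inv_id_assoc,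
            Category.comp_id]
      inv_hom_id := by
        apply pushout.hom_ext <;> dsimp only [φ, ψ]
        · rw [pushout.inl_desc_assoc, Category.assoc, pushout.inl_desc, Iso.inv_hom_id_assoc,
            Category.comp_id]
        · rw [pushout.inr_desc_assoc, Category.assoc, pushout.inr_desc, Iso.inv_hom_id_assoc,
            Category.comp_id] }
  refine Arrow.isoMk ((PreservesPushout.iso L s t).symm ≪≫ e1) pcBY ?_
  dsimp
  rw [Category.assoc, Iso.inv_comp_eq]
  symm
  apply pushout.hom_ext
  · rw [PreservesPushout.inl_iso_hom_assoc]
    rw [← L.map_comp_assoc]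
    show L.map (pushout.inl s t ≫ pushoutProduct i j) ≫ pcBY.hom = _
    rw [show pushout.inl s t ≫ pushoutProduct i j = prod.map (𝟙 B) j from
      pushout.inl_desc _ _ _]
    have : L.map (prod.map (𝟙 B) j) ≫ pcBY.hom =
        pcBX.hom ≫ prod.map (𝟙 (L.obj B)) (L.map j) := by
      simpa [pcBX, pcBY, PreservesLimitPair.iso_hom] using
        prodComparison_natural L (𝟙 B) j
    rw [this]
    simp [e1, φ, pushoutProduct]
    rw [pushout.inl_desc_assoc, Category.assoc, pushout.inl_desc]
  · rw [PreservesPushout.inr_iso_hom_assoc]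
    rw [← L.map_comp_assoc]
    show L.map (pushout.inr s t ≫ pushoutProduct i j) ≫ pcBY.hom = _
    rw [show pushout.inr s t ≫ pushoutProduct i j = prod.map i (𝟙 Y) from
      pushout.inr_desc _ _ _]
    have : L.map (prod.map i (𝟙 Y)) ≫ pcBY.hom =
        pcAY.hom ≫ prod.map (L.map i) (𝟙 (L.obj Y)) := by
      simpa [pcAY, pcBY, PreservesLimitPair.iso_hom] using
        prodComparison_natural L i (𝟙 Y)
    rw [this]
    simp [e1, φ, pushoutProduct]
    rw [pushout.inr_desc_assoc, Category.assoc, pushout.inr_desc]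

/-- Let `L ⊣ R` be a Quillen equivalence of monoidal model categories
(cartesian monoidal structures) where `L` is strong monoidal (it preserves binary
products and pushouts) and `D` carries the `R`-lifted model structure.  Assume the
pushout-product axiom holds in `C` and that `L` is a left Quillen functor (cofibrations
and acyclic cofibrations of `D` being generated by the images under `L` of the (acyclic)
cofibrations of `C`).  Then for (generating) cofibrations `i`, `j` of `C` the pushout
product `L i □ L j` is isomorphic to `L (i □ j)` — hence it is a cofibration, and it is
acyclic as soon as `i` or `j` is a weak equivalence. -/
theorem stmt9 {C : Type u} [Category.{v} C] {D : Type u'} [Category.{v'} D]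
    [HasBinaryProducts C] [HasPushouts C] [HasBinaryProducts D] [HasPushouts D]
    (MC : ModelStructure C) (MD : ModelStructure D)
    (L : C ⥤ D) (R : D ⥤ C) (adj : L ⊣ R)
    (hlift : IsRLifted MC MD R)
    (hprod : PreservesLimitsOfShape (Discrete WalkingPair) L)
    (hpush : PreservesColimitsOfShape WalkingSpan L)
    (hLcof : ∀ {X Y : C} (f : X ⟶ Y), MC.Cof f → MD.Cof (L.map f))
    (hLacof : ∀ {X Y : C} (f : X ⟶ Y), MC.Cof f → MC.W f → MD.Cof (L.map f) ∧ MD.W (L.map f))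
    (hppC : ∀ {A B X Y : C} (i : A ⟶ B) (j : X ⟶ Y), MC.Cof i → MC.Cof j →
      MC.Cof (pushoutProduct i j) ∧
        ((MC.W i ∨ MC.W j) → MC.W (pushoutProduct i j)))
    {A B X Y : C} (i : A ⟶ B) (j : X ⟶ Y) (hi : MC.Cof i) (hj : MC.Cof j) :
    Nonempty (Arrow.mk (L.map (pushoutProduct i j)) ≅
      Arrow.mk (pushoutProduct (L.map i) (L.map j))) ∧
    MD.Cof (pushoutProduct (L.map i) (L.map j)) ∧
    ((MC.W i ∨ MC.W j) → MD.W (pushoutProduct (L.map i) (L.map j))) := by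
  haveI := hprod
  haveI := hpush
  obtain ⟨hcof, hweq⟩ := hppC i j hi hj
  let e := pushoutProductComparisonIso L i j
  refine ⟨⟨e⟩, ?_, ?_⟩
  · exact cof_of_arrow_iso MD _ _ e (hLcof _ hcof)
  · intro h
    exact weq_of_arrow_iso MD _ _ e ((hLacof _ hcof (hweq h)).2)
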